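/- arXiv:math/0307092 — 2 statements merged into one kernel-verified Lean document; each statement's English description precedes it below -/
import Mathlib

section
/- Let x, y ∈ ℂ∖{0,1} with x ≠ y. Then all five numbers x, y, y/x, (1−x⁻¹)/(1−y⁻¹), (1−x)/(1−y) have strictly positive imaginary part if and only if Im y > 0 and x lies in the interior of the convex hull of {0, 1, y} in ℂ. Consequently, the set FT⁺ is connected. -/
/-!
Formalization of a statement from "Extended Bloch group and the
Cheeger–Chern–Simons class" by W. D. Neumann.
-/

noncomputable section
open scoped Classical
open Complex

namespace ExtendedBloch

/-- The set `FT` of five-tuples entering the five term relation. -/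
def FTSet : Set (Fin 5 → ℂ) :=
  {v | ∃ x y : ℂ, (x ≠ 0 ∧ x ≠ 1) ∧ (y ≠ 0 ∧ y ≠ 1) ∧ x ≠ y ∧
      v = ![x, y, y / x, (1 - x⁻¹) / (1 - y⁻¹), (1 - x) / (1 - y)]}

/-- `FT⁺`: tuples in `FT` all of whose coordinates lie in the upper half plane. -/
def FTPlus : Set (Fin 5 → ℂ) := {v | v ∈ FTSet ∧ ∀ i, 0 < (v i).im}

/-- Positivity of the imaginary part of a quotient. -/
lemma imdiv {z w : ℂ} (hw : w ≠ 0) :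
    0 < (z / w).im ↔ 0 < z.im * w.re - z.re * w.im := by
  have h : 0 < normSq w := Complex.normSq_pos.2 hw
  rw [Complex.div_im, div_sub_div_same]
  constructor
  · intro h1
    have h2 := mul_pos h1 h
    rwa [div_mul_cancel₀ _ (ne_of_gt h)] at h2
  · intro h1
    exact div_pos h1 h

lemma convex_halfplane (p q r : ℝ) :
    Convex ℝ {z : ℂ | 0 ≤ p * z.re + q * z.im + r} := by
  intro u hu v hv a b ha hb hab
  simp only [Set.mem_setOf_eq, Complex.add_re, Complex.add_im, Complex.smul_re,
    Complex.smul_im, smul_eq_mul] at *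
  have habr : a * r + b * r = r := by rw [← add_mul, hab, one_mul]
  nlinarith [mul_nonneg ha hu, mul_nonneg hb hv, habr]

lemma interior_halfplane_subset {p q r : ℝ} (hpq : p ≠ 0 ∨ q ≠ 0) {S : Set ℂ}
    (hS : S ⊆ {z | 0 ≤ p * z.re + q * z.im + r}) :
    interior S ⊆ {z | 0 < p * z.re + q * z.im + r} := by
  intro x hx
  have hx0 : 0 ≤ p * x.re + q * x.im + r := hS (interior_subset hx)
  rcases hx0.lt_or_eq with h | h
  · exact h
  · exfalso
    obtain ⟨ε, hε, hball⟩ := Metric.isOpen_iff.1 isOpen_interior x hx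
    have hv : 0 < p ^ 2 + q ^ 2 := by
      rcases hpq with h' | h' <;> positivity
    set c : ℝ := Real.sqrt (p ^ 2 + q ^ 2) with hc
    have hcpos : 0 < c := Real.sqrt_pos.2 hv
    set t : ℝ := ε / (2 * c) with ht
    have htpos : 0 < t := by positivity
    set v : ℂ := ⟨p, q⟩ with hvdef
    have hznorm : ‖v‖ = c := by
      rw [Complex.norm_def]
      rw [hc]
      congr 1
      simp [hvdef, Complex.normSq_mk]
      ring
    set z : ℂ := x - t • v with hz
    have hzball : z ∈ Metric.ball x ε := by
      rw [Metric.mem_ball, dist_eq_norm]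
      have h' : z - x = -(t • v) := by rw [hz]; ring
      rw [h', norm_neg, norm_smul, hznorm, Real.norm_eq_abs, abs_of_pos htpos, ht]
      rw [div_mul_eq_mul_div]
      rw [div_lt_iff₀ (by positivity)]
      nlinarith
    have hzS : 0 ≤ p * z.re + q * z.im + r :=
      hS (interior_subset (hball hzball))
    have hzre : z.re = x.re - t * p := by
      simp [hz, hvdef, Complex.sub_re, Complex.smul_re]
    have hzim : z.im = x.im - t * q := by
      simp [hz, hvdef, Complex.sub_im, Complex.smul_im]
    rw [hzre, hzim] at hzS
    nlinarith

/-- Interior of the triangle with vertices `0, 1, y`. -/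
lemma mem_interior_triangle {x y : ℂ} (hy : 0 < y.im) :
    x ∈ interior (convexHull ℝ ({0, 1, y} : Set ℂ)) ↔
      0 < x.im ∧ 0 < y.im * x.re - y.re * x.im ∧
        0 < y.im - x.im - x.re * y.im + x.im * y.re := by
  constructor
  · intro hx
    have hsub : ({0, 1, y} : Set ℂ) ⊆ {z | 0 ≤ (0:ℝ) * z.re + 1 * z.im + 0} := by
      rintro z (rfl | rfl | rfl) <;> simp [hy.le]
    have hsubB : ({0, 1, y} : Set ℂ) ⊆ {z | 0 ≤ y.im * z.re + (-y.re) * z.im + 0} := by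
      rintro z (rfl | rfl | rfl) <;> simp <;> nlinarith [hy.le]
    have hsubA : ({0, 1, y} : Set ℂ) ⊆
        {z | 0 ≤ (-y.im) * z.re + (y.re - 1) * z.im + y.im} := by
      rintro z (rfl | rfl | rfl) <;> simp <;> nlinarith [hy.le]
    have h1 := interior_halfplane_subset (Or.inr one_ne_zero)
      (convexHull_min hsub (convex_halfplane _ _ _)) hx
    have h2 := interior_halfplane_subset (Or.inl (ne_of_gt hy))
      (convexHull_min hsubB (convex_halfplane _ _ _)) hx
    have h3 := interior_halfplane_subset (Or.inl (neg_ne_zero.2 (ne_of_gt hy)))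
      (convexHull_min hsubA (convex_halfplane _ _ _)) hx
    simp only [Set.mem_setOf_eq] at h1 h2 h3
    refine ⟨by linarith, by nlinarith, by nlinarith⟩
  · intro ⟨h1, h2, h3⟩
    set T : Set ℂ := {z | 0 < z.im ∧ 0 < y.im * z.re - y.re * z.im ∧
        0 < y.im - z.im - z.re * y.im + z.im * y.re} with hT
    have hTopen : IsOpen T := by
      have c1 : Continuous fun z : ℂ => y.im * z.re - y.re * z.im := by continuity
      have c2 : Continuous fun z : ℂ => y.im - z.im - z.re * y.im + z.im * y.re := by
        continuity
      exact (isOpen_lt continuous_const Complex.continuous_im).inter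
        ((isOpen_lt continuous_const c1).inter (isOpen_lt continuous_const c2))
    have hTsub : T ⊆ convexHull ℝ ({0, 1, y} : Set ℂ) := by
      rintro z ⟨hz1, hz2, hz3⟩
      set c : ℝ := z.im / y.im with hcdef
      set b : ℝ := z.re - c * y.re with hbdef
      have hc : 0 < c := div_pos hz1 hy
      have hb : 0 < b := by
        have : b = (y.im * z.re - y.re * z.im) / y.im := by
          rw [hbdef, hcdef]; field_simp
        rw [this]
        exact div_pos hz2 hy
      have hbc : b + c < 1 := by
        have : 1 - (b + c) = (y.im - z.im - z.re * y.im + z.im * y.re) / y.im := by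
          rw [hbdef, hcdef]; field_simp; ring
        nlinarith [div_pos hz3 hy]
      have h0mem : (0:ℂ) ∈ convexHull ℝ ({0, 1, y} : Set ℂ) :=
        subset_convexHull ℝ _ (by simp)
      have h1mem : (1:ℂ) ∈ convexHull ℝ ({0, 1, y} : Set ℂ) :=
        subset_convexHull ℝ _ (by simp)
      have hymem : y ∈ convexHull ℝ ({0, 1, y} : Set ℂ) :=
        subset_convexHull ℝ _ (by simp)
      have hbcpos : 0 < b + c := by linarith
      have hw : (b / (b + c)) • (1:ℂ) + (c / (b + c)) • y ∈
          convexHull ℝ ({0, 1, y} : Set ℂ) :=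
        (convex_convexHull ℝ _) h1mem hymem (by positivity) (by positivity)
          (by field_simp)
      have hz : (1 - (b + c)) • (0:ℂ) + (b + c) • ((b / (b + c)) • (1:ℂ) +
          (c / (b + c)) • y) ∈ convexHull ℝ ({0, 1, y} : Set ℂ) :=
        (convex_convexHull ℝ _) h0mem hw (by linarith) hbcpos.le (by ring)
      have heq : (1 - (b + c)) • (0:ℂ) + (b + c) • ((b / (b + c)) • (1:ℂ) +
          (c / (b + c)) • y) = z := by
        rw [smul_zero, zero_add, smul_add, smul_smul, smul_smul]
        rw [mul_div_cancel₀ _ (ne_of_gt hbcpos), mul_div_cancel₀ _ (ne_of_gt hbcpos)]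
        apply Complex.ext
        · simp only [Complex.add_re, Complex.smul_re, Complex.one_re, smul_eq_mul]
          rw [hbdef]; ring
        · simp only [Complex.add_im, Complex.smul_im, Complex.one_im, smul_eq_mul]
          rw [hcdef]; field_simp; ring
      rwa [heq] at hz
    exact interior_maximal hTsub hTopen ⟨h1, h2, h3⟩

lemma combo_pos {a b u v : ℝ} (ha : 0 ≤ a) (hb : 0 ≤ b) (hab : a + b = 1)
    (hu : 0 < u) (hv : 0 < v) : 0 < a * u + b * v := by
  nlinarith [mul_pos hu hv, mul_nonneg ha (mul_self_nonneg u),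
    mul_nonneg hb (mul_self_nonneg v)]

lemma ne_zero_of_im_pos {z : ℂ} (h : 0 < z.im) : z ≠ 0 := by
  intro h'; rw [h'] at h; simp at h

lemma ne_one_of_im_pos {z : ℂ} (h : 0 < z.im) : z ≠ 1 := by
  intro h'; rw [h'] at h; simp at h

/-- The five positivity conditions reduce to the barycentric ones. -/
lemma five_iff (x y : ℂ) :
    (0 < x.im ∧ 0 < y.im ∧ 0 < (y / x).im ∧ 0 < ((1 - x⁻¹) / (1 - y⁻¹)).im ∧
        0 < ((1 - x) / (1 - y)).im) ↔
      (0 < x.im ∧ 0 < y.im ∧ 0 < y.im * x.re - y.re * x.im ∧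
        0 < y.im - x.im - x.re * y.im + x.im * y.re) := by
  constructor
  · rintro ⟨h1, h2, h3, h4, h5⟩
    have hx0 : x ≠ 0 := ne_zero_of_im_pos h1
    have hy1 : (1:ℂ) - y ≠ 0 := sub_ne_zero.2 (Ne.symm (ne_one_of_im_pos h2))
    refine ⟨h1, h2, (imdiv hx0).1 h3, ?_⟩
    have hE := (imdiv hy1).1 h5
    have heq : (1 - x).im * (1 - y).re - (1 - x).re * (1 - y).im
        = y.im - x.im - x.re * y.im + x.im * y.re := by
      simp only [Complex.sub_re, Complex.sub_im, Complex.one_re, Complex.one_im]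
      ring
    rwa [heq] at hE
  · rintro ⟨h1, h2, hB, hA⟩
    have hx0 : x ≠ 0 := ne_zero_of_im_pos h1
    have hy0 : y ≠ 0 := ne_zero_of_im_pos h2
    have hy1' : y ≠ 1 := ne_one_of_im_pos h2
    have hy1 : (1:ℂ) - y ≠ 0 := sub_ne_zero.2 (Ne.symm hy1')
    have hw : (1:ℂ) - y⁻¹ ≠ 0 := by
      rw [sub_ne_zero]
      intro h
      exact hy1' (inv_eq_one.1 h.symm)
    have hnx : (0:ℝ) < normSq x := Complex.normSq_pos.2 hx0
    have hny : (0:ℝ) < normSq y := Complex.normSq_pos.2 hy0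
    have hnx' : x.re * x.re + x.im * x.im ≠ 0 := by
      rw [← Complex.normSq_apply]; exact ne_of_gt hnx
    have hny' : y.re * y.re + y.im * y.im ≠ 0 := by
      rw [← Complex.normSq_apply]; exact ne_of_gt hny
    refine ⟨h1, h2, (imdiv hx0).2 hB, ?_, ?_⟩
    · rw [imdiv hw]
      set E : ℝ := (1 - x⁻¹).im * (1 - y⁻¹).re - (1 - x⁻¹).re * (1 - y⁻¹).im with hEdef
      have hEeq : E = x.im / (x.re * x.re + x.im * x.im) *
            (1 - y.re / (y.re * y.re + y.im * y.im)) -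
          (1 - x.re / (x.re * x.re + x.im * x.im)) *
            (y.im / (y.re * y.re + y.im * y.im)) := by
        rw [hEdef]
        simp only [Complex.sub_re, Complex.sub_im, Complex.one_re, Complex.one_im,
          Complex.inv_re, Complex.inv_im, Complex.normSq_apply]
        ring
      have key : E * ((x.re * x.re + x.im * x.im) * (y.re * y.re + y.im * y.im) * y.im)
          = (y.im - x.im - x.re * y.im + x.im * y.re) * x.im *
              (y.re * y.re + y.im * y.im)
            + (y.im - x.im - x.re * y.im + x.im * y.re) * (y.im * x.re - y.re * x.im)
            + (y.im * x.re - y.re * x.im) * x.im * ((y.re - 1) ^ 2 + y.im ^ 2) := by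
        rw [hEeq]
        field_simp
        ring
      have hQ : 0 < (y.im - x.im - x.re * y.im + x.im * y.re) * x.im *
              (y.re * y.re + y.im * y.im)
            + (y.im - x.im - x.re * y.im + x.im * y.re) * (y.im * x.re - y.re * x.im)
            + (y.im * x.re - y.re * x.im) * x.im * ((y.re - 1) ^ 2 + y.im ^ 2) := by
        have hyy : (0:ℝ) < (y.re - 1) ^ 2 + y.im ^ 2 := by positivity
        have hny2 : (0:ℝ) < y.re * y.re + y.im * y.im := by
          rw [← Complex.normSq_apply]; exact hny
        exact add_pos (add_pos (mul_pos (mul_pos hA h1) hny2) (mul_pos hA hB))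
          (mul_pos (mul_pos hB h1) hyy)
      have hP : (0:ℝ) < (x.re * x.re + x.im * x.im) * (y.re * y.re + y.im * y.im) *
          y.im := by
        rw [← Complex.normSq_apply, ← Complex.normSq_apply]
        exact mul_pos (mul_pos hnx hny) h2
      nlinarith [key, hQ, hP]
    · rw [imdiv hy1]
      have heq : (1 - x).im * (1 - y).re - (1 - x).re * (1 - y).im
          = y.im - x.im - x.re * y.im + x.im * y.re := by
        simp only [Complex.sub_re, Complex.sub_im, Complex.one_re, Complex.one_im]
        ring
      rwa [heq]

/-- The five numbers `x, y, y/x, (1-x⁻¹)/(1-y⁻¹), (1-x)/(1-y)` all lie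
in the upper half plane iff `Im y > 0` and `x` is interior to the convex hull of
`{0, 1, y}`; consequently `FT⁺` is connected. -/
theorem ftPlus_characterization_and_connected :
    (∀ x y : ℂ, x ≠ 0 → x ≠ 1 → y ≠ 0 → y ≠ 1 → x ≠ y →
      ((0 < x.im ∧ 0 < y.im ∧ 0 < (y / x).im ∧ 0 < ((1 - x⁻¹) / (1 - y⁻¹)).im ∧
          0 < ((1 - x) / (1 - y)).im)
        ↔ (0 < y.im ∧ x ∈ interior (convexHull ℝ ({0, 1, y} : Set ℂ))))) ∧
    IsConnected FTPlus := by
  constructor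
  · intro x y _ _ _ _ _
    rw [five_iff]
    constructor
    · rintro ⟨h1, h2, h3, h4⟩
      exact ⟨h2, (mem_interior_triangle h2).2 ⟨h1, h3, h4⟩⟩
    · rintro ⟨h2, hmem⟩
      obtain ⟨h1, h3, h4⟩ := (mem_interior_triangle h2).1 hmem
      exact ⟨h1, h2, h3, h4⟩
  · -- connectedness
    set S : Set (ℂ × ℂ) := {p | 0 < p.1.im ∧ 0 < p.2.im ∧
        0 < p.2.im * p.1.re - p.2.re * p.1.im ∧
        0 < p.2.im - p.1.im - p.1.re * p.2.im + p.1.im * p.2.re} with hSdef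
    set Φ : ℂ × ℂ → (Fin 5 → ℂ) := fun p =>
      ![p.1, p.2, p.2 / p.1, (1 - p.1⁻¹) / (1 - p.2⁻¹), (1 - p.1) / (1 - p.2)]
      with hΦdef
    have hfive : ∀ p : ℂ × ℂ, p ∈ S →
        (0 < p.1.im ∧ 0 < p.2.im ∧ 0 < (p.2 / p.1).im ∧
          0 < ((1 - p.1⁻¹) / (1 - p.2⁻¹)).im ∧ 0 < ((1 - p.1) / (1 - p.2)).im) := by
      intro p hp
      exact (five_iff p.1 p.2).2 hp
    have hFT : FTPlus = Φ '' S := by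
      ext v
      constructor
      · rintro ⟨⟨x, y, ⟨hx0, hx1⟩, ⟨hy0, hy1⟩, hxy, hveq⟩, hall⟩
        have h0 := hall 0
        have h1 := hall 1
        have h2 := hall 2
        have h3 := hall 3
        have h4 := hall 4
        rw [hveq] at h0 h1 h2 h3 h4
        simp only [Matrix.cons_val_zero, Matrix.cons_val_one, Matrix.head_cons,
          Matrix.cons_val_two, Matrix.tail_cons, Matrix.cons_val_three,
          Matrix.cons_val_four] at h0 h1 h2 h3 h4
        refine ⟨(x, y), (five_iff x y).1 ⟨h0, h1, h2, h3, h4⟩, hveq.symm⟩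
      · rintro ⟨⟨x, y⟩, hp, rfl⟩
        obtain ⟨h0, h1, h2, h3, h4⟩ := hfive _ hp
        have hx0 : x ≠ 0 := ne_zero_of_im_pos h0
        have hx1 : x ≠ 1 := ne_one_of_im_pos h0
        have hy0 : y ≠ 0 := ne_zero_of_im_pos h1
        have hy1 : y ≠ 1 := ne_one_of_im_pos h1
        have hxy : x ≠ y := by
          intro h
          rw [h, div_self hy0] at h2
          simp at h2
        refine ⟨⟨x, y, ⟨hx0, hx1⟩, ⟨hy0, hy1⟩, hxy, rfl⟩, ?_⟩
        intro i
        fin_cases i <;>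
          simp only [hΦdef, Matrix.cons_val_zero, Matrix.cons_val_one, Matrix.head_cons,
            Matrix.cons_val_two, Matrix.tail_cons, Matrix.cons_val_three,
            Matrix.cons_val_four] <;>
          assumption
    -- S is the image of a convex set
    set U : Set (ℝ × ℝ × ℂ) := {w | 0 < w.1 ∧ 0 < w.2.1 ∧ w.1 + w.2.1 < 1 ∧
        0 < w.2.2.im} with hUdef
    set F : ℝ × ℝ × ℂ → ℂ × ℂ := fun w => ((w.1 : ℂ) + (w.2.1 : ℂ) * w.2.2, w.2.2)
      with hFdef
    have hSU : S = F '' U := by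
      ext p
      constructor
      · rintro ⟨h1, h2, hB, hA⟩
        refine ⟨((p.2.im * p.1.re - p.2.re * p.1.im) / p.2.im, p.1.im / p.2.im, p.2),
          ⟨div_pos hB h2, div_pos h1 h2, ?_, h2⟩, ?_⟩
        · have : (1:ℝ) - ((p.2.im * p.1.re - p.2.re * p.1.im) / p.2.im +
              p.1.im / p.2.im) = (p.2.im - p.1.im - p.1.re * p.2.im +
              p.1.im * p.2.re) / p.2.im := by
            field_simp
            ring
          nlinarith [div_pos hA h2]
        · rw [hFdef]
          apply Prod.ext
          · apply Complex.ext
            · simp only [Complex.add_re, Complex.mul_re, Complex.ofReal_re,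
                Complex.ofReal_im]
              field_simp
              ring
            · simp only [Complex.add_im, Complex.mul_im, Complex.ofReal_re,
                Complex.ofReal_im]
              field_simp
              ring
          · rfl
      · rintro ⟨⟨b, c, y⟩, ⟨hb, hc, hbc, hy⟩, rfl⟩
        simp only [hSdef, hFdef, Set.mem_setOf_eq, Complex.add_im, Complex.add_re,
          Complex.mul_im, Complex.mul_re, Complex.ofReal_re, Complex.ofReal_im]
        refine ⟨by nlinarith, hy, by nlinarith, by nlinarith⟩
    have hUconv : Convex ℝ U := by
      intro w hw w' hw' a b ha hb hab
      obtain ⟨h1, h2, h3, h4⟩ := hw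
      obtain ⟨h1', h2', h3', h4'⟩ := hw'
      simp only [hUdef, Set.mem_setOf_eq, Prod.fst_add, Prod.snd_add, Prod.smul_fst,
        Prod.smul_snd, smul_eq_mul, Complex.add_im, Complex.smul_im]
      refine ⟨combo_pos ha hb hab h1 h1', combo_pos ha hb hab h2 h2', ?_,
        combo_pos ha hb hab h4 h4'⟩
      have h5 := combo_pos ha hb hab (by linarith : (0:ℝ) < 1 - (w.1 + w.2.1))
        (by linarith : (0:ℝ) < 1 - (w'.1 + w'.2.1))
      nlinarith [h5]
    have hUne : U.Nonempty := by
      refine ⟨(1/3, 1/3, Complex.I), ?_, ?_, ?_, ?_⟩ <;> norm_num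
    have hUconn : IsConnected U :=
      (hUconv.isPathConnected hUne).isConnected
    have hFcont : Continuous F := by
      rw [hFdef]
      fun_prop
    have hSconn : IsConnected S := by
      rw [hSU]
      exact hUconn.image F hFcont.continuousOn
    have hΦcont : ContinuousOn Φ S := by
      rw [hΦdef]
      apply continuousOn_pi.2
      intro i
      have hne1 : ∀ p : ℂ × ℂ, p ∈ S → p.1 ≠ 0 := fun p hp =>
        ne_zero_of_im_pos hp.1
      have hne2 : ∀ p : ℂ × ℂ, p ∈ S → p.2 ≠ 0 := fun p hp =>
        ne_zero_of_im_pos hp.2.1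
      have hne3 : ∀ p : ℂ × ℂ, p ∈ S → (1:ℂ) - p.2⁻¹ ≠ 0 := by
        intro p hp
        rw [sub_ne_zero]
        intro h
        exact ne_one_of_im_pos hp.2.1 (inv_eq_one.1 h.symm)
      have hne4 : ∀ p : ℂ × ℂ, p ∈ S → (1:ℂ) - p.2 ≠ 0 := fun p hp =>
        sub_ne_zero.2 (Ne.symm (ne_one_of_im_pos hp.2.1))
      fin_cases i <;>
        simp only [Matrix.cons_val_zero, Matrix.cons_val_one, Matrix.head_cons,
          Matrix.cons_val_two, Matrix.tail_cons, Matrix.cons_val_three,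
          Matrix.cons_val_four]
      · exact continuous_fst.continuousOn
      · exact continuous_snd.continuousOn
      · exact ContinuousOn.div continuous_snd.continuousOn
          continuous_fst.continuousOn hne1
      · exact ContinuousOn.div
          (continuousOn_const.sub (continuous_fst.continuousOn.inv₀ hne1))
          (continuousOn_const.sub (continuous_snd.continuousOn.inv₀ hne2)) hne3
      · exact ContinuousOn.div
          (continuousOn_const.sub continuous_fst.continuousOn)
          (continuousOn_const.sub continuous_snd.continuousOn) hne4
    rw [hFT]
    exact hSconn.image Φ hΦcont

end ExtendedBloch
end
end

section
/- Let pᵢ, qᵢ ∈ ℤ for i = 0,…,4. Then Σᵢ₌₀⁴ (−1)ⁱ (Log xᵢ + pᵢπi)∧(−Log(1−xᵢ) + qᵢπi) = 0 in ℂ∧_ℤℂ for every (x₀,…,x₄) ∈ FT⁺ if and only if p₂ = p₁−p₀, p₃ = p₁−p₀+q₁−q₀, q₃ = q₂−q₁, p₄ = q₁−q₀, and q₄ = q₂−q₁−p₀. (That is, the lifted five-term relation is the most general lift of the five-term relation on which the wedge expression vanishes identically.) -/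
/-!
Formalization of a statement from "Extended Bloch group and the
Cheeger–Chern–Simons class" by W. D. Neumann.
-/

noncomputable section
open scoped Classical
open Complex

namespace ExtendedBloch

/-- The wedge `a ∧ b` in `ℂ ∧_ℤ ℂ`, the second exterior power of `ℂ` as a `ℤ`-module. -/
def wedgeC (a b : ℂ) : ⋀[ℤ]^2 ℂ :=
  ⟨ExteriorAlgebra.ιMulti ℤ 2 ![a, b],
   ExteriorAlgebra.ιMulti_range ℤ 2 (Set.mem_range_self _)⟩

/-- The wedge `(Log z + pπi) ∧ (-Log(1-z) + qπi) ∈ ℂ ∧_ℤ ℂ`. -/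
def wTerm (z : ℂ) (p q : ℤ) : ⋀[ℤ]^2 ℂ :=
  wedgeC (Complex.log z + (p : ℂ) * (Real.pi : ℂ) * Complex.I)
    (-Complex.log (1 - z) + (q : ℂ) * (Real.pi : ℂ) * Complex.I)


lemma wedgeC_val (a b : ℂ) :
    (wedgeC a b : ExteriorAlgebra ℤ ℂ)
      = ExteriorAlgebra.ι ℤ a * ExteriorAlgebra.ι ℤ b := by
  show ExteriorAlgebra.ιMulti ℤ 2 ![a, b] = _
  rw [ExteriorAlgebra.ιMulti_apply]
  simp [List.ofFn_succ]

lemma wedgeC_add_left (a a' b : ℂ) :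
    wedgeC (a + a') b = wedgeC a b + wedgeC a' b := by
  apply Subtype.ext
  simp [wedgeC_val, map_add, add_mul]

lemma wedgeC_add_right (a b b' : ℂ) :
    wedgeC a (b + b') = wedgeC a b + wedgeC a b' := by
  apply Subtype.ext
  simp [wedgeC_val, map_add, mul_add]

lemma wedgeC_smul_left (n : ℤ) (a b : ℂ) :
    wedgeC (n • a) b = n • wedgeC a b := by
  apply Subtype.ext
  rw [Submodule.coe_smul, wedgeC_val, wedgeC_val, map_zsmul, smul_mul_assoc]

lemma wedgeC_smul_right (n : ℤ) (a b : ℂ) :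
    wedgeC a (n • b) = n • wedgeC a b := by
  apply Subtype.ext
  rw [Submodule.coe_smul, wedgeC_val, wedgeC_val, map_zsmul, mul_smul_comm]

lemma wedgeC_self (a : ℂ) : wedgeC a a = 0 := by
  apply Subtype.ext
  simp [wedgeC_val, ExteriorAlgebra.ι_sq_zero]

lemma wedgeC_neg_left (a b : ℂ) : wedgeC (-a) b = - wedgeC a b := by
  have := wedgeC_smul_left (-1) a b
  simpa using this

lemma wedgeC_neg_right (a b : ℂ) : wedgeC a (-b) = - wedgeC a b := by
  have := wedgeC_smul_right (-1) a b
  simpa using this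

lemma wedgeC_sub_left (a a' b : ℂ) :
    wedgeC (a - a') b = wedgeC a b - wedgeC a' b := by
  rw [sub_eq_add_neg, wedgeC_add_left, wedgeC_neg_left, sub_eq_add_neg]

lemma wedgeC_sub_right (a b b' : ℂ) :
    wedgeC a (b - b') = wedgeC a b - wedgeC a b' := by
  rw [sub_eq_add_neg, wedgeC_add_right, wedgeC_neg_right, sub_eq_add_neg]

lemma wedgeC_swap (a b : ℂ) : wedgeC b a = - wedgeC a b := by
  have h := wedgeC_self (a + b)
  rw [wedgeC_add_left, wedgeC_add_right, wedgeC_add_right, wedgeC_self, wedgeC_self] at h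
  have h2 : wedgeC a b + wedgeC b a = 0 := by simpa using h
  exact eq_neg_of_add_eq_zero_right h2



/-- `ℤ`-bilinear "determinant" form on `ℂ`. -/
def Blin : ℂ →ₗ[ℤ] ℂ →ₗ[ℤ] ℝ :=
  LinearMap.mk₂ ℤ (fun a b => a.re * b.im - a.im * b.re)
    (by intro a a' b; simp [Complex.add_re, Complex.add_im]; ring)
    (by intro n a b; simp [zsmul_eq_mul, Complex.mul_re, Complex.mul_im]; ring)
    (by intro a b b'; simp [Complex.add_re, Complex.add_im]; ring)
    (by intro n a b; simp [zsmul_eq_mul, Complex.mul_re, Complex.mul_im]; ring)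

def f2 : ℂ [⋀^Fin 2]→ₗ[ℤ] ℝ :=
  { toMultilinearMap := LinearMap.uncurryLeft
      ((MultilinearMap.ofSubsingletonₗ (R:=ℤ) (S:=ℤ) (M₂:=ℂ) (M₃:=ℝ) (0 : Fin 1)).toLinearMap.comp Blin)
    map_eq_zero_of_eq' := by
      intro v i j hv hij
      fin_cases i <;> fin_cases j <;> simp_all [Fin.tail] <;>
        (simp [Blin]; ring) }

def famF : ∀ i : ℕ, ℂ [⋀^Fin i]→ₗ[ℤ] ℝ
  | 2 => f2
  | _ => 0

def phi : (⋀[ℤ]^2 ℂ) →ₗ[ℤ] ℝ :=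
  (ExteriorAlgebra.liftAlternating famF).comp (Submodule.subtype _)

lemma phi_wedgeC (a b : ℂ) :
    phi (wedgeC a b) = a.re * b.im - a.im * b.re := by
  show ExteriorAlgebra.liftAlternating famF (ExteriorAlgebra.ιMulti ℤ 2 ![a, b]) = _
  rw [ExteriorAlgebra.liftAlternating_apply_ιMulti]
  simp [famF, f2, Blin, LinearMap.uncurryLeft, Fin.tail]



lemma arg_pos_of_im_pos {z : ℂ} (h : 0 < z.im) : 0 < Complex.arg z := by
  rcases lt_or_eq_of_le (Complex.arg_nonneg_iff.2 h.le) with h'|h'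
  · exact h'
  · exfalso
    have := Complex.arg_eq_zero_iff.1 h'.symm
    simp [this.2] at h

lemma arg_lt_pi_of_im_ne {z : ℂ} (h : z.im ≠ 0) : Complex.arg z < Real.pi := by
  rcases lt_or_eq_of_le (Complex.arg_le_pi z) with h'|h'
  · exact h'
  · exact absurd (Complex.arg_eq_pi_iff.1 h').2 h

/-- If `exp w = z`, `Im w ∈ (-π, 2π)` and `z` is in the upper half plane, `log z = w`. -/
lemma log_eq_A {z w : ℂ} (hexp : Complex.exp w = z) (h1 : -Real.pi < w.im)
    (h2 : w.im < 2 * Real.pi) (hz : 0 < z.im) : Complex.log z = w := by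
  rcases le_or_gt w.im Real.pi with h | h
  · rw [← hexp, Complex.log_exp h1 h]
  · exfalso
    have h3 : Complex.exp (w - 2 * Real.pi * I) = z := by
      rw [Complex.exp_sub, Complex.exp_two_pi_mul_I, div_one, hexp]
    have h4 : Complex.log z = w - 2 * Real.pi * I := by
      rw [← h3, Complex.log_exp] <;>
        simp only [Complex.sub_im, Complex.mul_im, Complex.mul_re, Complex.I_im, Complex.I_re,
          Complex.ofReal_im, Complex.ofReal_re, Complex.re_ofNat, Complex.im_ofNat] <;> push_cast <;> nlinarith [Real.pi_pos]
    have h5 : Complex.arg z < 0 := by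
      rw [← Complex.log_im, h4]
      simp only [Complex.sub_im, Complex.mul_im, Complex.mul_re, Complex.I_im, Complex.I_re,
        Complex.ofReal_im, Complex.ofReal_re, Complex.re_ofNat, Complex.im_ofNat]
      nlinarith [Real.pi_pos]
    have h6 := Complex.arg_nonneg_iff.2 hz.le
    linarith

/-- If `exp w = z`, `Im w ∈ (-2π, π]` and `z` is in the lower half plane, `log z = w`. -/
lemma log_eq_B {z w : ℂ} (hexp : Complex.exp w = z) (h1 : -(2 * Real.pi) < w.im)
    (h2 : w.im ≤ Real.pi) (hz : z.im < 0) : Complex.log z = w := by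
  rcases lt_or_ge (-Real.pi) w.im with h | h
  · rw [← hexp, Complex.log_exp h h2]
  · exfalso
    have h3 : Complex.exp (w + 2 * Real.pi * I) = z := by
      rw [Complex.exp_add, Complex.exp_two_pi_mul_I, mul_one, hexp]
    have h4 : Complex.log z = w + 2 * Real.pi * I := by
      rw [← h3, Complex.log_exp] <;>
        simp only [Complex.add_im, Complex.mul_im, Complex.mul_re, Complex.I_im, Complex.I_re,
          Complex.ofReal_im, Complex.ofReal_re, Complex.re_ofNat, Complex.im_ofNat] <;> push_cast <;> nlinarith [Real.pi_pos]
    have h5 : 0 < Complex.arg z := by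
      rw [← Complex.log_im, h4]
      simp only [Complex.add_im, Complex.mul_im, Complex.mul_re, Complex.I_im, Complex.I_re,
        Complex.ofReal_im, Complex.ofReal_re, Complex.re_ofNat, Complex.im_ofNat]
      nlinarith [Real.pi_pos]
    have h6 := Complex.arg_neg_iff.2 hz
    linarith




section LogRel

variable {x y : ℂ}
variable (hx0 : x ≠ 0) (hx1 : x ≠ 1) (hy0 : y ≠ 0) (hy1 : y ≠ 1) (hxy : x ≠ y)
variable (h0 : 0 < x.im) (h1 : 0 < y.im) (h2 : 0 < (y / x).im)
variable (h3 : 0 < ((1 - x⁻¹) / (1 - y⁻¹)).im) (h4 : 0 < ((1 - x) / (1 - y)).im)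

include hx0 hy0 h0 h1 h2 in
lemma logS1 : Complex.log (y / x) = Complex.log y - Complex.log x := by
  apply log_eq_A
  · rw [Complex.exp_sub, Complex.exp_log hy0, Complex.exp_log hx0]
  · simp only [Complex.sub_im, Complex.log_im]
    have := arg_lt_pi_of_im_ne (z := x) (by linarith)
    have := arg_pos_of_im_pos h1
    linarith
  · simp only [Complex.sub_im, Complex.log_im]
    have := arg_lt_pi_of_im_ne (z := y) (by linarith)
    have := arg_pos_of_im_pos h0
    have := Real.pi_pos
    linarith
  · exact h2

include h0 h1 h4 in
lemma logS2 : Complex.log ((1 - x) / (1 - y)) = Complex.log (1 - x) - Complex.log (1 - y) := by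
  have hx1' : (1 : ℂ) - x ≠ 0 := fun h => by
    have : (1 - x).im = 0 := by rw [h]; simp
    simp at this; linarith
  have hy1' : (1 : ℂ) - y ≠ 0 := fun h => by
    have : (1 - y).im = 0 := by rw [h]; simp
    simp at this; linarith
  have hximn : (1 - x).im < 0 := by simp; linarith
  have hyimn : (1 - y).im < 0 := by simp; linarith
  apply log_eq_A
  · rw [Complex.exp_sub, Complex.exp_log hx1', Complex.exp_log hy1']
  · simp only [Complex.sub_im, Complex.log_im]
    have := Complex.neg_pi_lt_arg (1 - x)
    have := Complex.arg_neg_iff.2 hyimn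
    linarith
  · simp only [Complex.sub_im, Complex.log_im]
    have := Complex.arg_neg_iff.2 hximn
    have := Complex.neg_pi_lt_arg (1 - y)
    have := Real.pi_pos
    linarith
  · exact h4

include hx0 hx1 hy0 hy1 h2 h3 h4 in
lemma logS3 : Complex.log ((1 - x⁻¹) / (1 - y⁻¹))
    = Complex.log (y / x) + Complex.log ((1 - x) / (1 - y)) := by
  have hyx : y / x ≠ 0 := by
    intro h; simp [div_eq_zero_iff, hx0] at h; exact hy0 h
  have h4' : (1 - x) / (1 - y) ≠ 0 := fun h => by rw [h] at h4; simp at h4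
  have hy1' : (1 : ℂ) - y ≠ 0 := by
    intro h; apply hy1; linear_combination -h
  have hyinv : (1 : ℂ) - y⁻¹ ≠ 0 := by
    intro h
    apply hy1
    field_simp at h
    first | linear_combination h | linear_combination -h
  have hD : y * x - x ≠ 0 := by
    have hne := mul_ne_zero hx0 (sub_ne_zero_of_ne (Ne.symm (fun h => hy1 h.symm)))
    intro h; apply hne; linear_combination h
  apply log_eq_A
  · rw [Complex.exp_add, Complex.exp_log hyx, Complex.exp_log h4']
    rw [div_mul_div_comm, div_eq_div_iff (mul_ne_zero hx0 hy1') hyinv]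
    field_simp
    ring
  · simp only [Complex.add_im, Complex.log_im]
    have := arg_pos_of_im_pos h2
    have := arg_pos_of_im_pos h4
    have := Real.pi_pos
    linarith
  · simp only [Complex.add_im, Complex.log_im]
    have := arg_lt_pi_of_im_ne (z := y / x) (by linarith)
    have := arg_lt_pi_of_im_ne (z := (1 - x) / (1 - y)) (by linarith)
    linarith
  · exact h3

include hx0 hy0 hy1 hxy h1 h2 h3 in
lemma logS4 : Complex.log (1 - (1 - x⁻¹) / (1 - y⁻¹))
    = Complex.log (1 - y / x) - Complex.log (1 - y) := by
  have hy1' : (1 : ℂ) - y ≠ 0 := by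
    intro h; apply hy1; linear_combination -h
  have hyinv : (1 : ℂ) - y⁻¹ ≠ 0 := by
    intro h; apply hy1; field_simp at h
    first | linear_combination h | linear_combination -h
  have hD : y * x - x ≠ 0 := by
    have hne := mul_ne_zero hx0 (sub_ne_zero_of_ne (Ne.symm (fun h => hy1 h.symm)))
    intro h; apply hne; linear_combination h
  have hyx1 : (1 : ℂ) - y / x ≠ 0 := by
    intro h
    apply hxy
    field_simp at h
    first | linear_combination h | linear_combination -h
  have him2 : (1 - y / x).im < 0 := by simp; linarith
  have him1 : (1 - y).im < 0 := by simp; linarith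
  have him3 : (1 - (1 - x⁻¹) / (1 - y⁻¹)).im < 0 := by simp; linarith
  apply log_eq_B
  · rw [Complex.exp_sub, Complex.exp_log hyx1, Complex.exp_log hy1']
    rw [one_sub_div hyinv, one_sub_div hx0, div_div, div_eq_div_iff (mul_ne_zero hx0 hy1') hyinv]
    field_simp
    ring
  · simp only [Complex.sub_im, Complex.log_im]
    have := Complex.neg_pi_lt_arg (1 - y / x)
    have := Complex.arg_neg_iff.2 him1
    have := Real.pi_pos
    linarith
  · simp only [Complex.sub_im, Complex.log_im]
    have := Complex.arg_neg_iff.2 him2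
    have := Complex.neg_pi_lt_arg (1 - y)
    have := Real.pi_pos
    linarith
  · exact him3

include hx0 hx1 hy0 hy1 hxy h0 h1 h2 h3 h4 in
lemma logS5 : Complex.log (1 - (1 - x) / (1 - y))
    = Complex.log x + Complex.log (1 - y / x) - Complex.log (1 - y) := by
  have hy1' : (1 : ℂ) - y ≠ 0 := by
    intro h; apply hy1; linear_combination -h
  have him3 : (1 - (1 - x⁻¹) / (1 - y⁻¹)).im < 0 := by simp; linarith
  have hv3 : (1 : ℂ) - (1 - x⁻¹) / (1 - y⁻¹) ≠ 0 := by
    intro h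
    rw [h] at him3; simp at him3
  have him4 : (1 - (1 - x) / (1 - y)).im < 0 := by simp; linarith
  have hyinv : (1 : ℂ) - y⁻¹ ≠ 0 := by
    intro h; apply hy1; field_simp at h
    first | linear_combination h | linear_combination -h
  have hD : y * x - x ≠ 0 := by
    have hne := mul_ne_zero hx0 (sub_ne_zero_of_ne (Ne.symm (fun h => hy1 h.symm)))
    intro h; apply hne; linear_combination h
  rw [add_sub_assoc, ← logS4 hx0 hy0 hy1 hxy h1 h2 h3]
  apply log_eq_B
  · rw [Complex.exp_add, Complex.exp_log hx0, Complex.exp_log hv3]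
    rw [one_sub_div hyinv, one_sub_div hy1', mul_div_assoc', div_eq_div_iff hyinv hy1']
    field_simp
    ring
  · simp only [Complex.add_im, Complex.log_im]
    have := arg_pos_of_im_pos h0
    have := Complex.neg_pi_lt_arg (1 - (1 - x⁻¹) / (1 - y⁻¹))
    have := Real.pi_pos
    linarith
  · simp only [Complex.add_im, Complex.log_im]
    have := arg_lt_pi_of_im_ne (z := x) (by linarith)
    have := Complex.arg_neg_iff.2 him3
    linarith
  · exact him4

end LogRel


lemma wTerm_eq (z : ℂ) (p q : ℤ) :
    wTerm z p q = q • wedgeC (Complex.log z) ((Real.pi : ℂ) * I)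
      + p • wedgeC (Complex.log (1 - z)) ((Real.pi : ℂ) * I)
      - wedgeC (Complex.log z) (Complex.log (1 - z)) := by
  unfold wTerm
  rw [show (p : ℂ) * (Real.pi : ℂ) * I = p • ((Real.pi : ℂ) * I) from by
        rw [zsmul_eq_mul]; ring,
      show (q : ℂ) * (Real.pi : ℂ) * I = q • ((Real.pi : ℂ) * I) from by
        rw [zsmul_eq_mul]; ring]
  rw [wedgeC_add_left, wedgeC_smul_left, wedgeC_add_right, wedgeC_neg_right,
    wedgeC_smul_right, wedgeC_add_right, wedgeC_neg_right, wedgeC_smul_right,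
    wedgeC_self, wedgeC_swap (Complex.log (1 - z)) ((Real.pi : ℂ) * I)]
  simp only [smul_neg, smul_zero, add_zero]
  abel

lemma key (x y : ℂ)
    (hx0 : x ≠ 0) (hx1 : x ≠ 1) (hy0 : y ≠ 0) (hy1 : y ≠ 1) (hxy : x ≠ y)
    (h0 : 0 < x.im) (h1 : 0 < y.im) (h2 : 0 < (y / x).im)
    (h3 : 0 < ((1 - x⁻¹) / (1 - y⁻¹)).im) (h4 : 0 < ((1 - x) / (1 - y)).im)
    (p₀ p₁ p₂ p₃ p₄ q₀ q₁ q₂ q₃ q₄ : ℤ) :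
    wTerm x p₀ q₀ - wTerm y p₁ q₁ + wTerm (y / x) p₂ q₂
      - wTerm ((1 - x⁻¹) / (1 - y⁻¹)) p₃ q₃ + wTerm ((1 - x) / (1 - y)) p₄ q₄
    = (q₀ - q₂ + q₃ + p₄) • wedgeC (Complex.log x) ((Real.pi : ℂ) * I)
      + (q₂ - q₁ - q₃) • wedgeC (Complex.log y) ((Real.pi : ℂ) * I)
      + (p₀ - q₃ + q₄) • wedgeC (Complex.log (1 - x)) ((Real.pi : ℂ) * I)
      + (q₃ - q₄ - p₁ + p₃ - p₄) • wedgeC (Complex.log (1 - y)) ((Real.pi : ℂ) * I)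
      + (p₂ - p₃ + p₄) • wedgeC (Complex.log (1 - y / x)) ((Real.pi : ℂ) * I) := by
  have e1 := logS1 hx0 hy0 h0 h1 h2
  have e2 := logS2 h0 h1 h4
  have e3 := logS3 hx0 hx1 hy0 hy1 h2 h3 h4
  have e4 := logS4 hx0 hy0 hy1 hxy h1 h2 h3
  have e5 := logS5 hx0 hx1 hy0 hy1 hxy h0 h1 h2 h3 h4
  rw [wTerm_eq, wTerm_eq, wTerm_eq, wTerm_eq, wTerm_eq]
  rw [e4, e5, e3, e1, e2]
  simp only [wedgeC_sub_left, wedgeC_sub_right, wedgeC_add_left, wedgeC_add_right,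
    wedgeC_self, smul_add, smul_sub, smul_neg, smul_zero, sub_zero, add_zero]
  rw [wedgeC_swap (Complex.log x) (Complex.log (1 - x)),
    wedgeC_swap (Complex.log x) (Complex.log (1 - y))]
  module


lemma pvr_zpow (p : ℕ) [hp : Fact p.Prime] {q : ℚ} (hq : q ≠ 0) (n : ℤ) :
    padicValRat p (q ^ n) = n * padicValRat p q := by
  cases n with
  | ofNat m => rw [Int.ofNat_eq_coe, zpow_natCast, padicValRat.pow q]
  | negSucc m =>
      rw [zpow_negSucc, padicValRat.inv, padicValRat.pow q, Int.negSucc_eq]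
      push_cast; ring

lemma pv_small (p : ℕ) (m : ℕ) (hd : ¬ p ∣ m) :
    padicValRat p (m : ℚ) = 0 := by
  have h := padicValNat.eq_zero_of_not_dvd hd
  simp [padicValRat.of_nat, h]

lemma log_ind (a b c : ℤ)
    (h : (a : ℝ) * Real.log 2 + (b : ℝ) * Real.log 3 + (c : ℝ) * Real.log 5 = 0) :
    a = 0 ∧ b = 0 ∧ c = 0 := by
  have h2 : ((2:ℝ) ^ a) * ((3:ℝ) ^ b) * ((5:ℝ) ^ c) = 1 := by
    have hpos : (0:ℝ) < ((2:ℝ) ^ a) * ((3:ℝ) ^ b) * ((5:ℝ) ^ c) := by positivity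
    have hl : Real.log (((2:ℝ) ^ a) * ((3:ℝ) ^ b) * ((5:ℝ) ^ c)) = 0 := by
      rw [Real.log_mul (by positivity) (by positivity),
        Real.log_mul (by positivity) (by positivity),
        Real.log_zpow, Real.log_zpow, Real.log_zpow]
      linarith
    have he := Real.exp_log hpos
    rw [hl, Real.exp_zero] at he
    exact he.symm
  have h3 : ((2:ℚ) ^ a) * ((3:ℚ) ^ b) * ((5:ℚ) ^ c) = 1 := by
    have : (((2:ℚ) ^ a * (3:ℚ) ^ b * (5:ℚ) ^ c : ℚ) : ℝ) = ((1 : ℚ) : ℝ) := by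
      push_cast
      rw [h2]
    exact_mod_cast this
  have h20 : (2:ℚ) ^ a ≠ 0 := zpow_ne_zero _ (by norm_num)
  have h30 : (3:ℚ) ^ b ≠ 0 := zpow_ne_zero _ (by norm_num)
  have h50 : (5:ℚ) ^ c ≠ 0 := zpow_ne_zero _ (by norm_num)
  have key : ∀ p : ℕ, ∀ _ : Fact p.Prime,
      a * padicValRat p 2 + b * padicValRat p 3 + c * padicValRat p 5 = 0 := by
    intro p hp
    have := congrArg (padicValRat p) h3
    rw [padicValRat.mul (mul_ne_zero h20 h30) h50, padicValRat.mul h20 h30,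
      pvr_zpow p (by norm_num), pvr_zpow p (by norm_num), pvr_zpow p (by norm_num),
      padicValRat.one] at this
    linarith [this]
  have i2 : Fact (Nat.Prime 2) := ⟨by norm_num⟩
  have i3 : Fact (Nat.Prime 3) := ⟨by norm_num⟩
  have i5 : Fact (Nat.Prime 5) := ⟨by norm_num⟩
  have k2 := key 2 i2
  have k3 := key 3 i3
  have k5 := key 5 i5
  have e22 : padicValRat 2 2 = 1 := padicValRat.self (by norm_num)
  have e33 : padicValRat 3 3 = 1 := padicValRat.self (by norm_num)
  have e55 : padicValRat 5 5 = 1 := padicValRat.self (by norm_num)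
  have e23 : padicValRat 2 3 = 0 := by
    have h := pv_small 2 3 (by norm_num); norm_num at h; exact h
  have e25 : padicValRat 2 5 = 0 := by
    have h := pv_small 2 5 (by norm_num); norm_num at h; exact h
  have e32 : padicValRat 3 2 = 0 := by
    have h := pv_small 3 2 (by norm_num); norm_num at h; exact h
  have e35 : padicValRat 3 5 = 0 := by
    have h := pv_small 3 5 (by norm_num); norm_num at h; exact h
  have e52 : padicValRat 5 2 = 0 := by
    have h := pv_small 5 2 (by norm_num); norm_num at h; exact h
  have e53 : padicValRat 5 3 = 0 := by
    have h := pv_small 5 3 (by norm_num); norm_num at h; exact h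
  rw [e22, e23, e25] at k2
  rw [e32, e33, e35] at k3
  rw [e52, e53, e55] at k5
  refine ⟨by linarith, by linarith, by linarith⟩


lemma logAbs (z : ℂ) : Real.log ‖z‖ = Real.log (Complex.normSq z) / 2 := by
  rw [← Complex.sq_norm, Real.log_pow]
  push_cast
  ring

lemma point_eq (p₀ p₁ p₂ p₃ p₄ q₀ q₁ q₂ q₃ q₄ : ℤ)
    (h : ∀ v : Fin 5 → ℂ, v ∈ FTPlus →
      wTerm (v 0) p₀ q₀ - wTerm (v 1) p₁ q₁ + wTerm (v 2) p₂ q₂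
        - wTerm (v 3) p₃ q₃ + wTerm (v 4) p₄ q₄ = 0)
    (x y : ℂ)
    (hx0 : x ≠ 0) (hx1 : x ≠ 1) (hy0 : y ≠ 0) (hy1 : y ≠ 1) (hxy : x ≠ y)
    (h0 : 0 < x.im) (h1 : 0 < y.im) (h2 : 0 < (y / x).im)
    (h3 : 0 < ((1 - x⁻¹) / (1 - y⁻¹)).im) (h4 : 0 < ((1 - x) / (1 - y)).im) :
    ((q₀ - q₂ + q₃ + p₄ : ℤ) : ℝ) * Real.log (Complex.normSq x)
      + ((q₂ - q₁ - q₃ : ℤ) : ℝ) * Real.log (Complex.normSq y)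
      + ((p₀ - q₃ + q₄ : ℤ) : ℝ) * Real.log (Complex.normSq (1 - x))
      + ((q₃ - q₄ - p₁ + p₃ - p₄ : ℤ) : ℝ) * Real.log (Complex.normSq (1 - y))
      + ((p₂ - p₃ + p₄ : ℤ) : ℝ) * Real.log (Complex.normSq (1 - y / x)) = 0 := by
  have hmem : ![x, y, y / x, (1 - x⁻¹) / (1 - y⁻¹), (1 - x) / (1 - y)] ∈ FTPlus := by
    refine ⟨⟨x, y, ⟨hx0, hx1⟩, ⟨hy0, hy1⟩, hxy, rfl⟩, ?_⟩
    intro i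
    fin_cases i <;>
      simp only [Matrix.cons_val_zero, Matrix.cons_val_one, Matrix.head_cons,
        Matrix.cons_val_two, Matrix.tail_cons, Matrix.cons_val_three,
        Matrix.cons_val_four, Fin.isValue] <;> assumption
  have h5 := h _ hmem
  simp only [Matrix.cons_val_zero, Matrix.cons_val_one, Matrix.head_cons,
    Matrix.cons_val_two, Matrix.tail_cons, Matrix.cons_val_three,
    Matrix.cons_val_four, Fin.isValue] at h5
  rw [key x y hx0 hx1 hy0 hy1 hxy h0 h1 h2 h3 h4 p₀ p₁ p₂ p₃ p₄ q₀ q₁ q₂ q₃ q₄] at h5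
  have h6 := congrArg phi h5
  simp only [map_add, map_zsmul, map_zero, phi_wedgeC, Complex.log_re, Complex.log_im,
    Complex.mul_im, Complex.mul_re, Complex.I_re, Complex.I_im, Complex.ofReal_re,
    Complex.ofReal_im, smul_eq_mul, zsmul_eq_mul] at h6
  rw [logAbs, logAbs, logAbs, logAbs, logAbs] at h6
  have hp : ((q₀ - q₂ + q₃ + p₄ : ℤ) : ℝ) * Real.log (Complex.normSq x)
      + ((q₂ - q₁ - q₃ : ℤ) : ℝ) * Real.log (Complex.normSq y)
      + ((p₀ - q₃ + q₄ : ℤ) : ℝ) * Real.log (Complex.normSq (1 - x))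
      + ((q₃ - q₄ - p₁ + p₃ - p₄ : ℤ) : ℝ) * Real.log (Complex.normSq (1 - y))
      + ((p₂ - p₃ + p₄ : ℤ) : ℝ) * Real.log (Complex.normSq (1 - y / x)) = 0
      ∨ Real.pi = 0 := by
    apply mul_eq_zero.mp
    push_cast at h6 ⊢
    linear_combination 2 * h6
  exact hp.resolve_right Real.pi_ne_zero

/-- The alternating wedge sum vanishes identically on `FT⁺` iff the
integers `pᵢ, qᵢ` satisfy exactly the relations of the lifted five term relation. -/
theorem wedge_five_term_iff (p₀ p₁ p₂ p₃ p₄ q₀ q₁ q₂ q₃ q₄ : ℤ) :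
    (∀ x : Fin 5 → ℂ, x ∈ FTPlus →
      wTerm (x 0) p₀ q₀ - wTerm (x 1) p₁ q₁ + wTerm (x 2) p₂ q₂
        - wTerm (x 3) p₃ q₃ + wTerm (x 4) p₄ q₄ = 0)
    ↔ (p₂ = p₁ - p₀ ∧ p₃ = p₁ - p₀ + q₁ - q₀ ∧ q₃ = q₂ - q₁ ∧
        p₄ = q₁ - q₀ ∧ q₄ = q₂ - q₁ - p₀) := by
  have l4 : Real.log (4:ℝ) = 2 * Real.log 2 := by
    rw [show (4:ℝ) = 2^2 by norm_num, Real.log_pow]; push_cast; ring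
  have l9 : Real.log (9:ℝ) = 2 * Real.log 3 := by
    rw [show (9:ℝ) = 3^2 by norm_num, Real.log_pow]; push_cast; ring
  have lhalf : Real.log (1/2:ℝ) = -Real.log 2 := by
    rw [show (1/2:ℝ) = 2⁻¹ by norm_num, Real.log_inv]
  have lquart : Real.log (1/4:ℝ) = -(2 * Real.log 2) := by
    rw [show (1/4:ℝ) = 4⁻¹ by norm_num, Real.log_inv, l4]
  have l52 : Real.log (5/2:ℝ) = Real.log 5 - Real.log 2 :=
    Real.log_div (by norm_num) (by norm_num)
  have l54 : Real.log (5/4:ℝ) = Real.log 5 - 2 * Real.log 2 := by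
    rw [Real.log_div (by norm_num) (by norm_num), l4]
  have l92 : Real.log (9/2:ℝ) = 2 * Real.log 3 - Real.log 2 := by
    rw [Real.log_div (by norm_num) (by norm_num), l9]
  constructor
  · intro h
    -- Point 1 : x = 1/2 + I/2, y = 2I
    have P1 := point_eq p₀ p₁ p₂ p₃ p₄ q₀ q₁ q₂ q₃ q₄ h ((1/2 : ℂ) + (1/2)*I) ((2:ℂ)*I)
      (by intro hh; norm_num [Complex.ext_iff] at hh)
      (by intro hh; norm_num [Complex.ext_iff] at hh)
      (by intro hh; norm_num [Complex.ext_iff] at hh)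
      (by intro hh; norm_num [Complex.ext_iff] at hh)
      (by intro hh; norm_num [Complex.ext_iff] at hh)
      (by norm_num)
      (by norm_num)
      (by norm_num [Complex.div_im, Complex.div_re, Complex.inv_im, Complex.inv_re,
        Complex.normSq_apply])
      (by norm_num [Complex.div_im, Complex.div_re, Complex.inv_im, Complex.inv_re,
        Complex.normSq_apply])
      (by norm_num [Complex.div_im, Complex.div_re, Complex.inv_im, Complex.inv_re,
        Complex.normSq_apply])
    rw [show Complex.normSq ((1/2 : ℂ) + (1/2)*I) = 1/2 by
          norm_num [Complex.normSq_apply],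
        show Complex.normSq ((2:ℂ)*I) = 4 by norm_num [Complex.normSq_apply],
        show Complex.normSq (1 - ((1/2 : ℂ) + (1/2)*I)) = 1/2 by
          norm_num [Complex.normSq_apply],
        show Complex.normSq (1 - (2:ℂ)*I) = 5 by norm_num [Complex.normSq_apply],
        show Complex.normSq (1 - ((2:ℂ)*I) / ((1/2 : ℂ) + (1/2)*I)) = 5 by
          norm_num [Complex.normSq_apply, Complex.div_im, Complex.div_re, Complex.inv_im,
            Complex.inv_re],
        lhalf, l4] at P1
    push_cast at P1
    obtain ⟨hA1, hB1, hC1⟩ := log_ind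
      (-(q₀ - q₂ + q₃ + p₄) + 2*(q₂ - q₁ - q₃) - (p₀ - q₃ + q₄)) 0
      ((q₃ - q₄ - p₁ + p₃ - p₄) + (p₂ - p₃ + p₄))
      (by push_cast; linarith [P1])
    -- Point 2 : x = 1/2 + I/2, y = 1 + 2I
    have P2 := point_eq p₀ p₁ p₂ p₃ p₄ q₀ q₁ q₂ q₃ q₄ h ((1/2 : ℂ) + (1/2)*I) (1 + (2:ℂ)*I)
      (by intro hh; norm_num [Complex.ext_iff] at hh)
      (by intro hh; norm_num [Complex.ext_iff] at hh)
      (by intro hh; norm_num [Complex.ext_iff] at hh)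
      (by intro hh; norm_num [Complex.ext_iff] at hh)
      (by intro hh; norm_num [Complex.ext_iff] at hh)
      (by norm_num)
      (by norm_num)
      (by norm_num [Complex.div_im, Complex.div_re, Complex.inv_im, Complex.inv_re,
        Complex.normSq_apply])
      (by norm_num [Complex.div_im, Complex.div_re, Complex.inv_im, Complex.inv_re,
        Complex.normSq_apply])
      (by norm_num [Complex.div_im, Complex.div_re, Complex.inv_im, Complex.inv_re,
        Complex.normSq_apply])
    rw [show Complex.normSq ((1/2 : ℂ) + (1/2)*I) = 1/2 by
          norm_num [Complex.normSq_apply],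
        show Complex.normSq (1 + (2:ℂ)*I) = 5 by norm_num [Complex.normSq_apply],
        show Complex.normSq (1 - ((1/2 : ℂ) + (1/2)*I)) = 1/2 by
          norm_num [Complex.normSq_apply],
        show Complex.normSq (1 - (1 + (2:ℂ)*I)) = 4 by norm_num [Complex.normSq_apply],
        show Complex.normSq (1 - (1 + (2:ℂ)*I) / ((1/2 : ℂ) + (1/2)*I)) = 5 by
          norm_num [Complex.normSq_apply, Complex.div_im, Complex.div_re, Complex.inv_im,
            Complex.inv_re],
        lhalf, l4] at P2
    push_cast at P2
    obtain ⟨hA2, hB2, hC2⟩ := log_ind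
      (-(q₀ - q₂ + q₃ + p₄) - (p₀ - q₃ + q₄) + 2*(q₃ - q₄ - p₁ + p₃ - p₄)) 0
      ((q₂ - q₁ - q₃) + (p₂ - p₃ + p₄))
      (by push_cast; linarith [P2])
    -- Point 3 : x = I/2, y = -1/2 + 3I/2
    have P3 := point_eq p₀ p₁ p₂ p₃ p₄ q₀ q₁ q₂ q₃ q₄ h ((1/2 : ℂ)*I) (-(1/2) + (3/2 : ℂ)*I)
      (by intro hh; norm_num [Complex.ext_iff] at hh)
      (by intro hh; norm_num [Complex.ext_iff] at hh)
      (by intro hh; norm_num [Complex.ext_iff] at hh)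
      (by intro hh; norm_num [Complex.ext_iff] at hh)
      (by intro hh; norm_num [Complex.ext_iff] at hh)
      (by norm_num)
      (by norm_num)
      (by norm_num [Complex.div_im, Complex.div_re, Complex.inv_im, Complex.inv_re,
        Complex.normSq_apply])
      (by norm_num [Complex.div_im, Complex.div_re, Complex.inv_im, Complex.inv_re,
        Complex.normSq_apply])
      (by norm_num [Complex.div_im, Complex.div_re, Complex.inv_im, Complex.inv_re,
        Complex.normSq_apply])
    rw [show Complex.normSq ((1/2 : ℂ)*I) = 1/4 by norm_num [Complex.normSq_apply],
        show Complex.normSq (-(1/2) + (3/2 : ℂ)*I) = 5/2 by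
          norm_num [Complex.normSq_apply],
        show Complex.normSq (1 - (1/2 : ℂ)*I) = 5/4 by norm_num [Complex.normSq_apply],
        show Complex.normSq (1 - (-(1/2) + (3/2 : ℂ)*I)) = 9/2 by
          norm_num [Complex.normSq_apply],
        show Complex.normSq (1 - (-(1/2) + (3/2 : ℂ)*I) / ((1/2 : ℂ)*I)) = 5 by
          norm_num [Complex.normSq_apply, Complex.div_im, Complex.div_re, Complex.inv_im,
            Complex.inv_re],
        lquart, l52, l54, l92] at P3
    push_cast at P3
    obtain ⟨hA3, hB3, hC3⟩ := log_ind
      (-2*(q₀ - q₂ + q₃ + p₄) - (q₂ - q₁ - q₃) - 2*(p₀ - q₃ + q₄) - (q₃ - q₄ - p₁ + p₃ - p₄))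
      (2*(q₃ - q₄ - p₁ + p₃ - p₄))
      ((q₂ - q₁ - q₃) + (p₀ - q₃ + q₄) + (p₂ - p₃ + p₄))
      (by push_cast; linarith [P3])
    omega
  · rintro ⟨r1, r2, r3, r4, r5⟩ v hv
    obtain ⟨⟨a, b, ⟨ha0, ha1⟩, ⟨hb0, hb1⟩, hab, rfl⟩, him⟩ := hv
    have h0 := him 0
    have h1 := him 1
    have h2 := him 2
    have h3 := him 3
    have h4 := him 4
    simp only [Matrix.cons_val_zero, Matrix.cons_val_one, Matrix.head_cons,
      Matrix.cons_val_two, Matrix.tail_cons, Matrix.cons_val_three,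
      Matrix.cons_val_four, Fin.isValue] at h0 h1 h2 h3 h4 ⊢
    rw [key a b ha0 ha1 hb0 hb1 hab h0 h1 h2 h3 h4 p₀ p₁ p₂ p₃ p₄ q₀ q₁ q₂ q₃ q₄]
    rw [show q₀ - q₂ + q₃ + p₄ = 0 by omega,
        show q₂ - q₁ - q₃ = 0 by omega,
        show p₀ - q₃ + q₄ = 0 by omega,
        show q₃ - q₄ - p₁ + p₃ - p₄ = 0 by omega,
        show p₂ - p₃ + p₄ = 0 by omega]
    simp

end ExtendedBloch
end
end
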